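/- Let (m_j) and (n_j) be strictly increasing sequences of positive integers with m_1 = 100, n_1 = 1, m_{j+1} ≥ j² m_j², and n_{j+1} > (4 / log 100) · n_j · log(m_{j+1}). Suppose j ≥ 2 and j_1, …, j_ℓ are indices with each m_{j_i} ≤ m_{j-1} and the product m_{j_1} ⋯ m_{j_ℓ} < m_j⁴. Then n_{j_1} + ⋯ + n_{j_ℓ} < n_j. -/

import Mathlib

open Real in
/-- Weight-to-admissibility: if every `m_{j_i} ≤ m_{j-1}` and
    `m_{j_1} ⋯ m_{j_ℓ} < m_j⁴`, then `n_{j_1} + ⋯ + n_{j_ℓ} < n_j`. -/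
theorem stmt_8 (m n : ℕ → ℕ)
    (hm1 : m 1 = 100) (hn1 : n 1 = 1)
    (hmpos : ∀ j, 1 ≤ j → 0 < m j) (hnpos : ∀ j, 1 ≤ j → 0 < n j)
    (hmmono : ∀ j, 1 ≤ j → m j < m (j + 1))
    (hnmono : ∀ j, 1 ≤ j → n j < n (j + 1))
    (hmg : ∀ j, 1 ≤ j → j ^ 2 * (m j) ^ 2 ≤ m (j + 1))
    (hng : ∀ j, 1 ≤ j →
      (4 / Real.log 100) * (n j : ℝ) * Real.log (m (j + 1)) < (n (j + 1) : ℝ))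
    (j : ℕ) (hj : 2 ≤ j) (ℓ : ℕ) (hℓ : 1 ≤ ℓ)
    (idx : Fin ℓ → ℕ) (hidx : ∀ i, 1 ≤ idx i)
    (hle : ∀ i, m (idx i) ≤ m (j - 1))
    (hprod : (∏ i, m (idx i)) < (m j) ^ 4) :
    (∑ i, n (idx i)) < n j := by
  have mmono : ∀ a b, 1 ≤ a → a ≤ b → m a ≤ m b := by
    intro a b ha hab
    induction hab with
    | refl => exact le_rfl
    | @step k h ih => exact ih.trans (hmmono k (ha.trans h)).le
  have nmono : ∀ a b, 1 ≤ a → a ≤ b → n a ≤ n b := by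
    intro a b ha hab
    induction hab with
    | refl => exact le_rfl
    | @step k h ih => exact ih.trans (hnmono k (ha.trans h)).le
  have mstrict : ∀ a b, 1 ≤ a → a < b → m a < m b := by
    intro a b ha hab
    exact lt_of_lt_of_le (hmmono a ha) (mmono (a + 1) b (by omega) hab)
  have hidxle : ∀ i, idx i ≤ j - 1 := by
    intro i
    by_contra h
    push_neg at h
    exact absurd (hle i) (not_le.mpr (mstrict (j - 1) (idx i) (by omega) h))
  have hj1 : 1 ≤ j - 1 := by omega
  have hkey := hng (j - 1) hj1
  rw [Nat.sub_add_cancel (by omega : 1 ≤ j)] at hkey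
  set L := Real.log (m j) with hL
  have h100 : ∀ k, 1 ≤ k → (100 : ℝ) ≤ (m k : ℝ) := by
    intro k hk
    exact_mod_cast hm1 ▸ mmono 1 k le_rfl hk
  have hlog100 : (0 : ℝ) < Real.log 100 := Real.log_pos (by norm_num)
  have hlogk : ∀ k, 1 ≤ k → Real.log 100 ≤ Real.log (m k) := by
    intro k hk
    exact Real.log_le_log (by norm_num) (h100 k hk)
  have hLpos : 0 < L := lt_of_lt_of_le hlog100 (hlogk j (by omega))
  have hterm : ∀ i, 4 * L * (n (idx i) : ℝ) ≤ (n j : ℝ) * Real.log (m (idx i)) := by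
    intro i
    have hk1 : 1 ≤ idx i := hidx i
    have hnk : (n (idx i) : ℝ) ≤ (n (j - 1) : ℝ) := by
      exact_mod_cast nmono _ _ hk1 (hidxle i)
    have h1 : 4 * L * (n (idx i) : ℝ) ≤ 4 * L * (n (j - 1) : ℝ) :=
      mul_le_mul_of_nonneg_left hnk (by positivity)
    have h2 : 4 * L * (n (j - 1) : ℝ)
        = ((4 / Real.log 100) * (n (j - 1) : ℝ) * L) * Real.log 100 := by
      field_simp
    have hcnn : 0 ≤ (4 / Real.log 100) * (n (j - 1) : ℝ) * L :=
      mul_nonneg (mul_nonneg (div_nonneg (by norm_num) hlog100.le) (Nat.cast_nonneg _)) hLpos.le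
    have h3 : ((4 / Real.log 100) * (n (j - 1) : ℝ) * L) * Real.log 100
        ≤ ((4 / Real.log 100) * (n (j - 1) : ℝ) * L) * Real.log (m (idx i)) :=
      mul_le_mul_of_nonneg_left (hlogk _ hk1) hcnn
    have h4 : ((4 / Real.log 100) * (n (j - 1) : ℝ) * L) * Real.log (m (idx i))
        ≤ (n j : ℝ) * Real.log (m (idx i)) :=
      mul_le_mul_of_nonneg_right hkey.le
        (Real.log_nonneg (le_trans (by norm_num) (h100 _ hk1)))
    linarith
  have hne : ∀ i ∈ Finset.univ, ((m (idx i) : ℝ)) ≠ 0 := by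
    intro i _
    have := h100 _ (hidx i)
    positivity
  have hsum : 4 * L * (∑ i, (n (idx i) : ℝ)) ≤ (n j : ℝ) * Real.log (∏ i, (m (idx i) : ℝ)) := by
    rw [Real.log_prod hne, Finset.mul_sum, Finset.mul_sum]
    exact Finset.sum_le_sum fun i _ => hterm i
  have hprodpos : (0 : ℝ) < ∏ i, (m (idx i) : ℝ) := by
    apply Finset.prod_pos
    intro i _
    have := h100 _ (hidx i)
    positivity
  have hprodR : Real.log (∏ i, (m (idx i) : ℝ)) < Real.log ((m j : ℝ) ^ 4) := by
    apply Real.log_lt_log hprodpos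
    push_cast
    exact_mod_cast hprod
  have hpow : Real.log ((m j : ℝ) ^ 4) = 4 * L := by
    rw [Real.log_pow]
    push_cast
    ring
  have hnj : (0 : ℝ) < (n j : ℝ) := by
    exact_mod_cast hnpos j (by omega)
  have hfin : 4 * L * (∑ i, (n (idx i) : ℝ)) < 4 * L * (n j : ℝ) := by
    calc 4 * L * (∑ i, (n (idx i) : ℝ)) ≤ (n j : ℝ) * Real.log (∏ i, (m (idx i) : ℝ)) := hsum
      _ < (n j : ℝ) * (4 * L) := by
          rw [← hpow]; exact mul_lt_mul_of_pos_left hprodR hnj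
      _ = 4 * L * (n j : ℝ) := by ring
  have hlt := lt_of_mul_lt_mul_left hfin (by positivity : (0:ℝ) ≤ 4 * L)
  exact_mod_cast hlt
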